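/- Define r(L) = (22L − 10)/(35L² − 50L + 75) for L ∈ ℝ. Then r(5/11) = 0, and consequently if the machine plays the policy m = (5/11)h, the human's best response for c_H is h = 0 and the game outcome is (0,0), the machine's global optimum. -/
import Mathlib


noncomputable def cH (h m : ℝ) : ℝ :=
  h^2/2 + 7*m^2/30 - h*m/3 + 2*h/15 - 22*m/75 + 12/125

noncomputable def r (L : ℝ) : ℝ := (22*L - 10) / (35*L^2 - 50*L + 75)

theorem stmt_16 :
    r (5/11) = 0 ∧
    (∀ h : ℝ, cH 0 ((5/11) * 0) ≤ cH h ((5/11) * h)) := by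
  constructor
  · simp [r]; norm_num
  · intro h
    simp only [cH]
    nlinarith [sq_nonneg h]
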